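/- Let N ≥ 1 be an integer and let ν̄ ∈ ℂ[w]/(w^N) be an element whose coefficient of w^1 is nonzero. If M ⊆ ℂ[w]/(w^N) is a ℂ-linear subspace such that ν̄·M ⊆ M and M contains an element whose coefficient of w^0 (constant term) is nonzero, then M = ℂ[w]/(w^N). -/

import Mathlib

open Polynomial

noncomputable section

/-- The ring `ℂ[w]/(w^N)`. -/
def BN (N : ℕ) : Type :=
  Polynomial ℂ ⧸ Ideal.span {(Polynomial.X : Polynomial ℂ) ^ N}

instance (N : ℕ) : CommRing (BN N) :=
  inferInstanceAs (CommRing (Polynomial ℂ ⧸ Ideal.span {(Polynomial.X : Polynomial ℂ) ^ N}))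

instance (N : ℕ) : Algebra ℂ (BN N) :=
  inferInstanceAs (Algebra ℂ (Polynomial ℂ ⧸ Ideal.span {(Polynomial.X : Polynomial ℂ) ^ N}))

/-- The class of a polynomial in `ℂ[w]/(w^N)`. -/
def BN.mk (N : ℕ) (p : Polynomial ℂ) : BN N :=
  (Ideal.Quotient.mk (Ideal.span {(Polynomial.X : Polynomial ℂ) ^ N}) p : _)

/-- The coefficient of `w^j` in the unique polynomial representative of degree `< N` of an
element of `ℂ[w]/(w^N)` (for `j < N`). -/
noncomputable def BN.coeff (N j : ℕ) (b : BN N) : ℂ :=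
  ((Quotient.out
      (show Polynomial ℂ ⧸ Ideal.span {(Polynomial.X : Polynomial ℂ) ^ N} from b))
      %ₘ (Polynomial.X ^ N)).coeff j

namespace Statement9Aux

lemma mk_out (N : ℕ) (b : BN N) :
    BN.mk N (Quotient.out
      (show Polynomial ℂ ⧸ Ideal.span {(Polynomial.X : Polynomial ℂ) ^ N} from b)) = b :=
  Quotient.out_eq _

lemma mk_eq_mk_of_dvd {N : ℕ} {p q : Polynomial ℂ} (h : X ^ N ∣ p - q) :
    BN.mk N p = BN.mk N q := by
  unfold BN.mk
  refine Ideal.Quotient.eq.mpr (Ideal.mem_span_singleton.mpr ?_)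
  exact h

lemma coeff_mk (N j : ℕ) (p : Polynomial ℂ) :
    BN.coeff N j (BN.mk N p) = (p %ₘ (X ^ N)).coeff j := by
  unfold BN.coeff
  set r := Quotient.out
      (show Polynomial ℂ ⧸ Ideal.span {(Polynomial.X : Polynomial ℂ) ^ N} from BN.mk N p) with hr
  have hmk : BN.mk N r = BN.mk N p := mk_out N (BN.mk N p)
  have hdvd : (X : Polynomial ℂ) ^ N ∣ r - p := by
    have := (Ideal.Quotient.eq).mp hmk
    rwa [Ideal.mem_span_singleton] at this
  have h0 : (r - p) %ₘ (X ^ N) = 0 :=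
    (Polynomial.modByMonic_eq_zero_iff_dvd (monic_X_pow N)).mpr hdvd
  have : r %ₘ (X ^ N) = (r - p) %ₘ (X ^ N) + p %ₘ (X ^ N) := by
    rw [← Polynomial.add_modByMonic, sub_add_cancel]
  rw [this, h0, zero_add]

lemma coeff_mk_lt {N j : ℕ} (hj : j < N) (p : Polynomial ℂ) :
    BN.coeff N j (BN.mk N p) = p.coeff j := by
  rw [coeff_mk]
  conv_rhs => rw [show p = p %ₘ X ^ N + X ^ N * (p /ₘ X ^ N) from
    (Polynomial.modByMonic_add_div p (X ^ N)).symm]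
  rw [Polynomial.coeff_add, mul_comm, Polynomial.coeff_mul_X_pow', if_neg (by omega), add_zero]

/-- The `j`-th coefficient, as a linear map. -/
noncomputable def coeffL (N j : ℕ) : BN N →ₗ[ℂ] ℂ where
  toFun := BN.coeff N j
  map_add' a b := by
    obtain ⟨p, rfl⟩ := Ideal.Quotient.mk_surjective (I := Ideal.span {(X : Polynomial ℂ) ^ N}) a
    obtain ⟨q, rfl⟩ := Ideal.Quotient.mk_surjective (I := Ideal.span {(X : Polynomial ℂ) ^ N}) b
    have : (Ideal.Quotient.mk (Ideal.span {(X : Polynomial ℂ) ^ N}) p)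
        + Ideal.Quotient.mk _ q = BN.mk N (p + q) := by
      exact (map_add (Ideal.Quotient.mk _) p q).symm
    erw [this]
    show BN.coeff N j (BN.mk N (p+q)) = BN.coeff N j (BN.mk N p) + BN.coeff N j (BN.mk N q)
    rw [coeff_mk, coeff_mk, coeff_mk, Polynomial.add_modByMonic, Polynomial.coeff_add]
  map_smul' c a := by
    obtain ⟨p, rfl⟩ := Ideal.Quotient.mk_surjective (I := Ideal.span {(X : Polynomial ℂ) ^ N}) a
    have : c • (Ideal.Quotient.mk (Ideal.span {(X : Polynomial ℂ) ^ N}) p)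
        = BN.mk N (c • p) := by
      show c • BN.mk N p = BN.mk N (c • p)
      rw [Algebra.smul_def]
      show BN.mk N (C c) * BN.mk N p = BN.mk N (c • p)
      rw [show BN.mk N (C c) * BN.mk N p = BN.mk N (C c * p) from rfl, smul_eq_C_mul]
    erw [this]
    show BN.coeff N j (BN.mk N (c • p)) = c * BN.coeff N j (BN.mk N p)
    rw [coeff_mk, coeff_mk, Polynomial.smul_modByMonic, Polynomial.coeff_smul, smul_eq_mul]

lemma mk_mul (N : ℕ) (p q : Polynomial ℂ) : BN.mk N p * BN.mk N q = BN.mk N (p * q) := rfl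

end Statement9Aux

open Statement9Aux in
/-- Let `N ≥ 1` and let `ν̄ ∈ ℂ[w]/(w^N)` have nonzero `w¹`-coefficient.
Any `ℂ`-subspace `M ⊆ ℂ[w]/(w^N)` stable under multiplication by `ν̄` and containing an
element with nonzero constant term is all of `ℂ[w]/(w^N)`. -/
theorem statement9 (N : ℕ) (hN : 1 ≤ N) (ν : BN N) (hν : BN.coeff N 1 ν ≠ 0)
    (M : Submodule ℂ (BN N)) (hmul : ∀ x ∈ M, ν * x ∈ M)
    (hconst : ∃ x ∈ M, BN.coeff N 0 x ≠ 0) :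
    M = ⊤ := by
  classical
  obtain ⟨x, hxM, hx0⟩ := hconst
  -- representatives
  set m : Polynomial ℂ := (Quotient.out
      (show Polynomial ℂ ⧸ Ideal.span {(Polynomial.X : Polynomial ℂ) ^ N} from ν)) %ₘ (X ^ N)
    with hm
  have hν_eq : ν = BN.mk N m := by
    rw [hm]
    have h1 : BN.mk N ((Quotient.out
        (show Polynomial ℂ ⧸ Ideal.span {(Polynomial.X : Polynomial ℂ) ^ N} from ν)) %ₘ (X ^ N))
        = BN.mk N (Quotient.out
        (show Polynomial ℂ ⧸ Ideal.span {(Polynomial.X : Polynomial ℂ) ^ N} from ν)) := by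
      apply mk_eq_mk_of_dvd
      set r := Quotient.out
        (show Polynomial ℂ ⧸ Ideal.span {(Polynomial.X : Polynomial ℂ) ^ N} from ν)
      have := Polynomial.modByMonic_add_div r (X ^ N)
      refine ⟨-(r /ₘ X ^ N), ?_⟩
      linear_combination this
    rw [h1, mk_out]
  have hc1 : m.coeff 1 ≠ 0 := hν
  set p : Polynomial ℂ := (Quotient.out
      (show Polynomial ℂ ⧸ Ideal.span {(Polynomial.X : Polynomial ℂ) ^ N} from x)) %ₘ (X ^ N)
    with hp
  have hx_eq : x = BN.mk N p := by
    rw [hp]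
    have h1 : BN.mk N ((Quotient.out
        (show Polynomial ℂ ⧸ Ideal.span {(Polynomial.X : Polynomial ℂ) ^ N} from x)) %ₘ (X ^ N))
        = BN.mk N (Quotient.out
        (show Polynomial ℂ ⧸ Ideal.span {(Polynomial.X : Polynomial ℂ) ^ N} from x)) := by
      apply mk_eq_mk_of_dvd
      set r := Quotient.out
        (show Polynomial ℂ ⧸ Ideal.span {(Polynomial.X : Polynomial ℂ) ^ N} from x)
      have := Polynomial.modByMonic_add_div r (X ^ N)
      refine ⟨-(r /ₘ X ^ N), ?_⟩
      linear_combination this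
    rw [h1, mk_out]
  have hp0 : p.coeff 0 ≠ 0 := hx0
  -- μ = ν - c₀
  set c0 : ℂ := m.coeff 0 with hc0
  set μpoly : Polynomial ℂ := m - C c0 with hμpoly
  have hμ0 : μpoly.coeff 0 = 0 := by simp [hμpoly, hc0]
  obtain ⟨u, hu⟩ : (X : Polynomial ℂ) ∣ μpoly := Polynomial.X_dvd_iff.mpr hμ0
  have hu0 : u.coeff 0 = m.coeff 1 := by
    have : μpoly.coeff 1 = m.coeff 1 := by simp [hμpoly]
    rw [← this, hu, Polynomial.coeff_X_mul]
  set μ : BN N := ν - algebraMap ℂ (BN N) c0 with hμdef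
  have hμmk : μ = BN.mk N μpoly := by
    rw [hμdef, hν_eq, hμpoly]
    show BN.mk N m - BN.mk N (C c0) = BN.mk N (m - C c0)
    exact (map_sub (Ideal.Quotient.mk _) m (C c0)).symm
  have hμM : ∀ y ∈ M, μ * y ∈ M := by
    intro y hy
    rw [hμdef, sub_mul]
    refine M.sub_mem (hmul y hy) ?_
    rw [← Algebra.smul_def]
    exact M.smul_mem c0 hy
  -- the family
  set v : Fin N → BN N := fun i => μ ^ (i : ℕ) * x with hv
  have hvM : ∀ i, v i ∈ M := by
    intro i
    rw [hv]
    obtain ⟨n, hn⟩ : ∃ n : ℕ, (i : ℕ) = n := ⟨i, rfl⟩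
    simp only [hn]
    clear hn
    induction n with
    | zero => simpa using hxM
    | succ k ih => rw [pow_succ, mul_comm (μ ^ k) μ, mul_assoc]; exact hμM _ ih
  have hvmk : ∀ i : Fin N, v i = BN.mk N ((u * X) ^ (i : ℕ) * p) := by
    intro i
    rw [hv, hμmk, hx_eq, hu, mul_comm X u]
    rfl
  -- coefficient computations
  have hcoeff : ∀ (i : Fin N) (j : ℕ), j < N →
      BN.coeff N j (v i) = if (i : ℕ) ≤ j then (u ^ (i : ℕ) * p).coeff (j - i) else 0 := by
    intro i j hj
    rw [hvmk, coeff_mk_lt hj]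
    rw [mul_pow, mul_comm (u ^ (i:ℕ)) (X ^ (i:ℕ)), mul_assoc, mul_comm (X ^ (i:ℕ)),
      Polynomial.coeff_mul_X_pow']
  have hdiag : ∀ i : Fin N, BN.coeff N i (v i) = (m.coeff 1) ^ (i : ℕ) * p.coeff 0 := by
    intro i
    rw [hcoeff i i i.isLt, if_pos le_rfl, Nat.sub_self]
    have : (u ^ (i:ℕ) * p).coeff 0 = (u.coeff 0) ^ (i:ℕ) * p.coeff 0 := by
      have h1 := map_mul (Polynomial.constantCoeff (R := ℂ)) (u ^ (i:ℕ)) p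
      have h2 := map_pow (Polynomial.constantCoeff (R := ℂ)) u (i:ℕ)
      simp only [Polynomial.constantCoeff_apply] at h1 h2
      rw [h1, h2]
    rw [this, hu0]
  have hlow : ∀ (i : Fin N) (j : ℕ), j < (i : ℕ) → BN.coeff N j (v i) = 0 := by
    intro i j hji
    rw [hcoeff i j (lt_trans hji i.isLt), if_neg (by omega)]
  -- linear independence
  have hdiag_ne : ∀ i : Fin N, BN.coeff N i (v i) ≠ 0 := by
    intro i
    rw [hdiag]
    exact mul_ne_zero (pow_ne_zero _ hc1) hp0
  have hli : LinearIndependent ℂ v := by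
    rw [Fintype.linearIndependent_iff]
    intro c hc
    suffices h : ∀ n : ℕ, ∀ i : Fin N, (i : ℕ) = n → c i = 0 by
      intro i; exact h i i rfl
    intro n
    induction n using Nat.strong_induction_on with
    | _ n ih =>
      intro i hi
      have happ := congrArg (coeffL N n) hc
      rw [map_sum, map_zero] at happ
      have hterm : ∀ k : Fin N, k ≠ i → coeffL N n (c k • v k) = 0 := by
        intro k hk
        rw [map_smul]
        rcases lt_trichotomy (k : ℕ) n with h | h | h
        · have : c k = 0 := ih (k : ℕ) h k rfl
          simp [this]
        · exact absurd (Fin.ext (h.trans hi.symm)) hk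
        · have : coeffL N n (v k) = 0 := hlow k n (by omega)
          simp [this, smul_eq_mul]
      rw [Finset.sum_eq_single i (fun k _ hk => hterm k hk) (by simp)] at happ
      rw [map_smul] at happ
      have hvi : coeffL N n (v i) ≠ 0 := by
        have : coeffL N n (v i) = BN.coeff N (i : ℕ) (v i) := by rw [hi]; rfl
        rw [this]; exact hdiag_ne i
      have := smul_eq_zero.mp happ
      tauto
  -- dimension argument
  have hbasis : Module.Basis (Fin N) ℂ (BN N) := by
    have h : (X : Polynomial ℂ) ^ N ≠ 0 := pow_ne_zero _ X_ne_zero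
    have b := (AdjoinRoot.powerBasis h).basis
    rw [AdjoinRoot.powerBasis_dim, natDegree_X_pow] at b
    exact b
  have hfd : FiniteDimensional ℂ (BN N) := Module.Finite.of_basis hbasis
  have hrank : Module.finrank ℂ (BN N) = N := by
    rw [Module.finrank_eq_card_basis hbasis, Fintype.card_fin]
  -- v with values in M
  have hliM : LinearIndependent ℂ (fun i : Fin N => (⟨v i, hvM i⟩ : M)) := by
    apply LinearIndependent.of_comp M.subtype
    exact hli
  have hle : N ≤ Module.finrank ℂ M := by
    simpa using hliM.fintype_card_le_finrank
  apply Submodule.eq_top_of_finrank_eq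
  have := Submodule.finrank_le M
  omega

end
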